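/- Let M̄ ∈ ℝ^{n×n} be symmetric positive definite and let K ∈ ℝ^{n×n} be such that K + Kᵀ is negative definite. Then there exists Δt₀ > 0 such that for all Δt ∈ (0, Δt₀), every complex eigenvalue λ of the matrix I_n + Δt·M̄⁻¹·K satisfies |λ| < 1. -/

import Mathlib

open Matrix

section Aux

variable {n : Type*} [Fintype n] [DecidableEq n]

lemma my_charpoly_eval (A : Matrix n n ℂ) (t : ℂ) :
    A.charpoly.eval t = (t • (1 : Matrix n n ℂ) - A).det := by
  rw [Matrix.charpoly, _root_.eval_det, Matrix.matPolyEquiv_charmatrix]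
  rw [Polynomial.eval_sub, Polynomial.eval_X, Polynomial.eval_C]
  congr 1
  ext i j
  simp [Matrix.scalar_apply, Matrix.smul_apply, Matrix.one_apply, Matrix.diagonal]

lemma my_re_dot (A : Matrix n n ℝ) (x : n → ℂ) :
    (star x ⬝ᵥ ((A.map Complex.ofReal) *ᵥ x)).re
      = (fun i => (x i).re) ⬝ᵥ (A *ᵥ fun i => (x i).re)
        + (fun i => (x i).im) ⬝ᵥ (A *ᵥ fun i => (x i).im) := by
  simp only [dotProduct, Matrix.mulVec, Pi.star_apply, Matrix.map_apply,
    Finset.mul_sum, Complex.re_sum, ← Finset.sum_add_distrib]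
  refine Finset.sum_congr rfl fun i _ => ?_
  refine Finset.sum_congr rfl fun j _ => ?_
  simp only [Complex.mul_re, Complex.mul_im, Complex.ofReal_re, Complex.ofReal_im,
    RCLike.star_def, Complex.conj_re, Complex.conj_im]
  ring

lemma my_im_dot (A : Matrix n n ℝ) (x : n → ℂ) :
    (star x ⬝ᵥ ((A.map Complex.ofReal) *ᵥ x)).im
      = (fun i => (x i).re) ⬝ᵥ (A *ᵥ fun i => (x i).im)
        - (fun i => (x i).im) ⬝ᵥ (A *ᵥ fun i => (x i).re) := by
  simp only [dotProduct, Matrix.mulVec, Pi.star_apply, Matrix.map_apply, ← Finset.sum_sub_distrib]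
  rw [Complex.im_sum]
  refine Finset.sum_congr rfl fun i _ => ?_
  simp only [Finset.mul_sum, Complex.im_sum, ← Finset.sum_sub_distrib]
  refine Finset.sum_congr rfl fun j _ => ?_
  simp [Complex.mul_im, Complex.conj_re, Complex.conj_im]
  ring

end Aux

/-- Schur stability of the Euler-discretized closed loop: if `M̄` is symmetric positive
definite and `K + Kᵀ` is negative definite, then there is `Δt₀ > 0` such that for every
`Δt ∈ (0, Δt₀)` all complex eigenvalues of `I + Δt M̄⁻¹ K` lie in the open unit disc. -/
theorem euler_closed_loop_schur_stable
    {n : Type*} [Fintype n] [DecidableEq n]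
    (M : Matrix n n ℝ) (hMsym : Mᵀ = M)
    (hMpos : ∀ x : n → ℝ, x ≠ 0 → 0 < x ⬝ᵥ (M *ᵥ x))
    (K : Matrix n n ℝ) (hK : ∀ x : n → ℝ, x ≠ 0 → x ⬝ᵥ ((K + Kᵀ) *ᵥ x) < 0) :
    ∃ Δt₀ > (0 : ℝ), ∀ Δt : ℝ, 0 < Δt → Δt < Δt₀ →
      ∀ lam : ℂ,
        ((((1 : Matrix n n ℝ) + Δt • (M⁻¹ * K)).map Complex.ofReal).charpoly).IsRoot lam →
          ‖lam‖ < 1 := by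
  classical
  set B : Matrix n n ℂ := (M⁻¹ * K).map Complex.ofReal with hB
  -- M is invertible
  have hMdet : M.det ≠ 0 := by
    intro h
    obtain ⟨v, hv, hv0⟩ := (Matrix.exists_mulVec_eq_zero_iff).mpr h
    have := hMpos v hv
    rw [hv0] at this
    simp at this
  -- quadratic form nonneg facts
  have hMnn : ∀ a : n → ℝ, 0 ≤ a ⬝ᵥ (M *ᵥ a) := by
    intro a
    by_cases ha : a = 0
    · simp [ha]
    · exact (hMpos a ha).le
  have hKnp : ∀ a : n → ℝ, a ⬝ᵥ ((K + Kᵀ) *ᵥ a) ≤ 0 := by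
    intro a
    by_cases ha : a = 0
    · simp [ha]
    · exact (hK a ha).le
  -- every root of B.charpoly has negative real part
  have key : ∀ μ : ℂ, B.charpoly.IsRoot μ → μ.re < 0 := by
    intro μ hμ
    rw [Polynomial.IsRoot, my_charpoly_eval] at hμ
    obtain ⟨x, hx0, hx⟩ := (Matrix.exists_mulVec_eq_zero_iff).mpr hμ
    have hBx : B *ᵥ x = μ • x := by
      have := hx
      rw [Matrix.sub_mulVec, Matrix.smul_mulVec, Matrix.one_mulVec, sub_eq_zero] at this
      exact this.symm
    -- K x = μ M x over ℂ
    have hKx : (K.map Complex.ofReal) *ᵥ x = μ • ((M.map Complex.ofReal) *ᵥ x) := by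
      have hmapmul : ∀ (P Q : Matrix n n ℝ),
          (P * Q).map Complex.ofReal = P.map Complex.ofReal * Q.map Complex.ofReal := by
        intro P Q
        ext i j
        simp [Matrix.mul_apply, Matrix.map_apply]
      have hMB : (M.map Complex.ofReal) * B = K.map Complex.ofReal := by
        rw [hB, ← hmapmul, ← mul_assoc, Matrix.mul_nonsing_inv M (isUnit_iff_ne_zero.mpr hMdet), one_mul]
      calc (K.map Complex.ofReal) *ᵥ x = ((M.map Complex.ofReal) * B) *ᵥ x := by rw [hMB]
        _ = (M.map Complex.ofReal) *ᵥ (B *ᵥ x) := by rw [Matrix.mulVec_mulVec]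
        _ = (M.map Complex.ofReal) *ᵥ (μ • x) := by rw [hBx]
        _ = μ • ((M.map Complex.ofReal) *ᵥ x) := by rw [Matrix.mulVec_smul]
    set a : n → ℝ := fun i => (x i).re with ha
    set b : n → ℝ := fun i => (x i).im with hb
    have hab : a ≠ 0 ∨ b ≠ 0 := by
      by_contra h
      push_neg at h
      apply hx0
      funext i
      have h1 := congrFun h.1 i
      have h2 := congrFun h.2 i
      simp only [ha, hb, Pi.zero_apply] at h1 h2
      exact Complex.ext h1 h2
    -- p > 0
    have hp : 0 < a ⬝ᵥ (M *ᵥ a) + b ⬝ᵥ (M *ᵥ b) := by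
      rcases hab with h | h
      · have := hMpos a h
        have := hMnn b
        linarith
      · have := hMpos b h
        have := hMnn a
        linarith
    -- r < 0
    have hr : a ⬝ᵥ (K *ᵥ a) + b ⬝ᵥ (K *ᵥ b) < 0 := by
      have hKt : ∀ c : n → ℝ, c ⬝ᵥ (Kᵀ *ᵥ c) = c ⬝ᵥ (K *ᵥ c) := by
        intro c
        rw [Matrix.mulVec_transpose, dotProduct_comm, ← Matrix.dotProduct_mulVec]
      have h2 : ∀ c : n → ℝ, c ⬝ᵥ ((K + Kᵀ) *ᵥ c) = 2 * (c ⬝ᵥ (K *ᵥ c)) := by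
        intro c
        rw [Matrix.add_mulVec, dotProduct_add, hKt]
        ring
      have ha' := hKnp a
      have hb' := hKnp b
      rw [h2] at ha' hb'
      rcases hab with h | h
      · have := hK a h; rw [h2] at this; linarith
      · have := hK b h; rw [h2] at this; linarith
    -- take quadratic forms
    have hdot := congrArg (fun v => star x ⬝ᵥ v) hKx
    simp only [dotProduct_smul, smul_eq_mul] at hdot
    have hre := congrArg Complex.re hdot
    have hMim : (star x ⬝ᵥ ((M.map Complex.ofReal) *ᵥ x)).im = 0 := by
      rw [my_im_dot]
      have : a ⬝ᵥ (M *ᵥ b) = b ⬝ᵥ (M *ᵥ a) := by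
        conv_lhs => rw [← hMsym]
        rw [Matrix.mulVec_transpose, dotProduct_comm, ← Matrix.dotProduct_mulVec]
      rw [← ha, ← hb] at *
      rw [this]; ring
    rw [my_re_dot, Complex.mul_re, hMim, my_re_dot] at hre
    rw [← ha, ← hb] at hre
    -- hre : a⬝Ka + b⬝Kb = μ.re * p - μ.im * 0
    have hre' : a ⬝ᵥ (K *ᵥ a) + b ⬝ᵥ (K *ᵥ b)
        = μ.re * (a ⬝ᵥ (M *ᵥ a) + b ⬝ᵥ (M *ᵥ b)) := by
      rw [hre]; ring
    nlinarith
  -- the set of roots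
  set s : Finset ℂ := B.charpoly.roots.toFinset with hs
  have hcp0 : B.charpoly ≠ 0 := (Matrix.charpoly_monic B).ne_zero
  -- transfer lemma
  have transfer : ∀ (Δt : ℝ), 0 < Δt → ∀ lam : ℂ,
      ((((1 : Matrix n n ℝ) + Δt • (M⁻¹ * K)).map Complex.ofReal).charpoly).IsRoot lam →
      B.charpoly.IsRoot ((lam - 1) / Δt) := by
    intro Δt hΔt lam h
    have hΔ : (Δt : ℂ) ≠ 0 := by exact_mod_cast hΔt.ne'
    have hmap : ((1 : Matrix n n ℝ) + Δt • (M⁻¹ * K)).map Complex.ofReal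
        = 1 + (Δt : ℂ) • B := by
      ext i j
      simp only [Matrix.map_apply, Matrix.add_apply, Matrix.smul_apply, Matrix.one_apply,
        smul_eq_mul, hB, Complex.ofReal_add, Complex.ofReal_mul, apply_ite Complex.ofReal,
        Complex.ofReal_one, Complex.ofReal_zero]
    rw [hmap, Polynomial.IsRoot, my_charpoly_eval] at h
    rw [Polynomial.IsRoot, my_charpoly_eval]
    have hfac : lam • (1 : Matrix n n ℂ) - (1 + (Δt : ℂ) • B)
        = (Δt : ℂ) • (((lam - 1) / Δt) • (1 : Matrix n n ℂ) - B) := by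
      rw [smul_sub, smul_smul, mul_div_cancel₀ _ hΔ, sub_smul, one_smul]
      abel
    rw [hfac, Matrix.det_smul] at h
    rcases mul_eq_zero.mp h with h | h
    · exact absurd h (pow_ne_zero _ hΔ)
    · exact h
  -- the bound function
  set φ : ℂ → ℝ := fun μ => -2 * μ.re / Complex.normSq μ with hφ
  have hφpos : ∀ μ ∈ s, 0 < φ μ := by
    intro μ hμmem
    have hroot : B.charpoly.IsRoot μ := by
      rw [Multiset.mem_toFinset, Polynomial.mem_roots hcp0] at hμmem
      exact hμmem
    have hre := key μ hroot
    have hμ0 : μ ≠ 0 := fun h => by simp [h] at hre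
    exact div_pos (by linarith) (Complex.normSq_pos.mpr hμ0)
  -- final small-step estimate
  have final : ∀ Δt : ℝ, 0 < Δt → ∀ μ : ℂ, μ.re < 0 → Δt < φ μ →
      ‖1 + (Δt : ℂ) * μ‖ < 1 := by
    intro Δt hΔt μ hre hlt
    have hμ0 : μ ≠ 0 := fun h => by simp [h] at hre
    have hnsq : 0 < Complex.normSq μ := Complex.normSq_pos.mpr hμ0
    have h1 : Δt * Complex.normSq μ < -2 * μ.re := by
      rw [hφ, lt_div_iff₀ hnsq] at hlt
      linarith
    have habs : (‖1 + (Δt : ℂ) * μ‖) ^ 2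
        = 1 + 2 * Δt * μ.re + Δt ^ 2 * Complex.normSq μ := by
      rw [Complex.sq_norm, Complex.normSq_apply, Complex.normSq_apply]
      simp [Complex.add_re, Complex.add_im, Complex.mul_re, Complex.mul_im]
      ring
    nlinarith [norm_nonneg (1 + (Δt : ℂ) * μ), habs]
  by_cases hsne : s.Nonempty
  · refine ⟨(s.image φ).min' (hsne.image φ), ?_, ?_⟩
    · obtain ⟨y, hy⟩ := Finset.mem_image.mp ((s.image φ).min'_mem (hsne.image φ))
      rw [← hy.2]
      exact hφpos y hy.1
    · intro Δt hΔt hΔtlt lam hroot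
      have hμroot := transfer Δt hΔt lam hroot
      set μ : ℂ := (lam - 1) / Δt with hμ
      have hμmem : μ ∈ s := Multiset.mem_toFinset.mpr
        ((Polynomial.mem_roots hcp0).mpr hμroot)
      have hre := key μ hμroot
      have hφge : (s.image φ).min' (hsne.image φ) ≤ φ μ :=
        Finset.min'_le _ _ (Finset.mem_image_of_mem φ hμmem)
      have hfin := final Δt hΔt μ hre (lt_of_lt_of_le hΔtlt hφge)
      have hΔ : (Δt : ℂ) ≠ 0 := by exact_mod_cast hΔt.ne'
      have hlam : (1 : ℂ) + (Δt : ℂ) * μ = lam := by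
        rw [hμ]; field_simp; ring
      rwa [hlam] at hfin
  · refine ⟨1, one_pos, ?_⟩
    intro Δt hΔt _ lam hroot
    have hμroot := transfer Δt hΔt lam hroot
    exact absurd ⟨(lam - 1) / Δt, Multiset.mem_toFinset.mpr
      ((Polynomial.mem_roots hcp0).mpr hμroot)⟩ hsne
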